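/- Fix N ≥ 1, finite words w1 and s (s nonempty) over a finite alphabet Σ, an ω-word w2, M > 2^{N+1}, and set w = w1·s^M·w2 and w' = w1·s^{M+1}·w2. If positions a_1, …, a_N, b_1, …, b_N ∈ ℕ together with the anchor positions satisfy the invariant with threshold 2·|s|, then for all i, j ∈ {1,…,N}: a_i = a_j iff b_i = b_j; a_i + 1 = a_j iff b_i + 1 = b_j; a_i < a_j iff b_i < b_j; and w(a_i) = w'(b_i). -/

import Mathlib

namespace Stmt3

variable {Γ : Type*}

/-- `m`-fold concatenation of a finite word. -/
def lpow (u : List Γ) : ℕ → List Γ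
  | 0 => []
  | m + 1 => u ++ lpow u m

/-- Concatenation of a finite word with an ω-word. -/
def wcat (u : List Γ) (w : ℕ → Γ) : ℕ → Γ := fun n =>
  if h : n < u.length then u.get ⟨n, h⟩ else w (n - u.length)

/-- Distance on `ℕ∞ = ℕ ∪ {∞}`: any distance involving `∞` is `∞`. -/
def ndist (x y : ℕ∞) : ℕ∞ :=
  if x = ⊤ ∨ y = ⊤ then ⊤ else (x - y) + (y - x)

/-- The family of positions indexed by `{-3, -2, -1, 0} ∪ {1, …, m}`:
the anchors are `0`, `|w1|`, `|w1| + Mv·|s|` and `∞`, and index `j ∈ {1,…,m}`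
is sent to the chosen position `a (j-1)`. -/
def posExt (w1len slen Mv m : ℕ) (a : Fin m → ℕ) : ℤ → ℕ∞ := fun j =>
  if j = -3 then 0
  else if j = -2 then (w1len : ℕ∞)
  else if j = -1 then ((w1len + Mv * slen : ℕ) : ℕ∞)
  else if j = 0 then ⊤
  else if h : 0 < j ∧ j ≤ (m : ℤ) then ((a ⟨(j - 1).toNat, by omega⟩ : ℕ) : ℕ∞)
  else 0

/-- The invariant `𝔍` with threshold `t` for families `A`, `B` of positions
indexed by `{-3, …, m}` (conditions (1)–(6)). -/
def EFInv (slen t m : ℕ) (A B : ℤ → ℕ∞) : Prop :=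
  ∀ j k : ℤ, -3 ≤ j → j ≤ (m : ℤ) → -3 ≤ k → k ≤ (m : ℤ) →
    ((A j ≤ A k ↔ B j ≤ B k) ∧
     (ndist (A j) (A k) < (t : ℕ∞) ↔ ndist (B j) (B k) < (t : ℕ∞)) ∧
     (ndist (A j) (A k) < (t : ℕ∞) → A j + B k = B j + A k) ∧
     (A j ≤ A (-2) ∨ B j ≤ B (-2) → B j = A j) ∧
     (A (-1) ≤ A j ∨ B (-1) ≤ B j → B j = A j + (slen : ℕ∞)) ∧
     ((A (-2) < A j ∧ A j < A (-1)) ∨ (B (-2) < B j ∧ B j < B (-1)) →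
       ∃ c : ℕ, ndist (A j) (B j) = ((c * slen : ℕ) : ℕ∞)))

lemma lpow_length (s : List Γ) (K : ℕ) : (lpow s K).length = K * s.length := by
  induction K with
  | zero => simp [lpow]
  | succ n ih => simp [lpow, ih]; ring

lemma lpow_getElem (s : List Γ) (hs : s ≠ []) (K q : ℕ) (hq : q < K * s.length) :
    (lpow s K)[q]'(by rw [lpow_length]; exact hq)
      = s[q % s.length]'(Nat.mod_lt _ (List.length_pos_iff.mpr hs)) := by
  induction K generalizing q with
  | zero => omega
  | succ n ih =>
    show (s ++ lpow s n)[q]'(by rw [List.length_append, lpow_length]; have h3 : (n+1) * s.length = n * s.length + s.length := (by ring); omega) = _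
    by_cases h : q < s.length
    · rw [List.getElem_append_left h]
      congr 1
      exact (Nat.mod_eq_of_lt h).symm
    · rw [List.getElem_append_right (le_of_not_gt h)]
      have h2 : q - s.length < n * s.length := by
        have h3 : (n+1) * s.length = n * s.length + s.length := by ring
        omega
      rw [ih _ h2]
      congr 1
      conv_rhs => rw [Nat.mod_eq_sub_mod (le_of_not_gt h)]

lemma ndist_coe (x y : ℕ) : ndist (x:ℕ∞) (y:ℕ∞) = (((x-y)+(y-x) : ℕ) : ℕ∞) := by
  rw [ndist, if_neg]
  · push_cast [ENat.coe_sub]; ring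
  · simp

lemma posExt_neg3 (w1len slen Mv m : ℕ) (a : Fin m → ℕ) :
    posExt w1len slen Mv m a (-3) = 0 := by simp [posExt]

lemma posExt_neg2 (w1len slen Mv m : ℕ) (a : Fin m → ℕ) :
    posExt w1len slen Mv m a (-2) = (w1len : ℕ∞) := by simp [posExt]

lemma posExt_neg1 (w1len slen Mv m : ℕ) (a : Fin m → ℕ) :
    posExt w1len slen Mv m a (-1) = ((w1len + Mv * slen : ℕ) : ℕ∞) := by simp [posExt]

lemma posExt_pos (w1len slen Mv m : ℕ) (a : Fin m → ℕ) (i : Fin m) :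
    posExt w1len slen Mv m a ((i:ℤ)+1) = ((a i : ℕ) : ℕ∞) := by
  have hi := i.isLt
  rw [posExt]
  rw [if_neg (by omega), if_neg (by omega), if_neg (by omega), if_neg (by omega),
    dif_pos (by constructor <;> omega)]
  congr 1
  congr 1
  apply Fin.ext
  simp

lemma wcat_pre (w1 v : List Γ) (w2 : ℕ → Γ) (p : ℕ) (h : p < w1.length) :
    wcat (w1 ++ v) w2 p = w1[p] := by
  rw [wcat, dif_pos (by simp only [List.length_append]; omega)]
  exact List.getElem_append_left h

lemma wcat_mid (w1 s : List Γ) (hs : s ≠ []) (K : ℕ) (w2 : ℕ → Γ) (p : ℕ)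
    (h1 : w1.length ≤ p) (h2 : p < w1.length + K * s.length) :
    wcat (w1 ++ lpow s K) w2 p
      = s[(p - w1.length) % s.length]'(Nat.mod_lt _ (List.length_pos_iff.mpr hs)) := by
  rw [wcat, dif_pos (by simp only [List.length_append, lpow_length]; omega)]
  show (w1 ++ lpow s K)[p]'_ = _
  rw [List.getElem_append_right h1, lpow_getElem s hs K _ (by omega)]

lemma wcat_post (w1 s : List Γ) (K : ℕ) (w2 : ℕ → Γ) (p : ℕ)
    (h : w1.length + K * s.length ≤ p) :
    wcat (w1 ++ lpow s K) w2 p = w2 (p - (w1.length + K * s.length)) := by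
  rw [wcat, dif_neg (by simp only [List.length_append, lpow_length]; omega)]
  congr 1
  simp [lpow_length]

/-- If the chosen positions together with the anchors satisfy the invariant
with threshold `2·|s|`, then they form a winning (partially isomorphic)
configuration for the Duplicator. -/
theorem invariant_winning {Γ : Type*} [Fintype Γ] (N : ℕ) (hN : 1 ≤ N)
    (w1 s : List Γ) (hs : s ≠ []) (w2 : ℕ → Γ) (M : ℕ) (hM : 2 ^ (N + 1) < M)
    (a b : Fin N → ℕ)
    (hinv : EFInv s.length (2 * s.length) N
      (posExt w1.length s.length M N a) (posExt w1.length s.length (M + 1) N b)) :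
    ∀ i j : Fin N,
      (a i = a j ↔ b i = b j) ∧
      (a i + 1 = a j ↔ b i + 1 = b j) ∧
      (a i < a j ↔ b i < b j) ∧
      wcat (w1 ++ lpow s M) w2 (a i) = wcat (w1 ++ lpow s (M + 1)) w2 (b i) := by
  have slpos : 0 < s.length := List.length_pos_iff.mpr hs
  set A := posExt w1.length s.length M N a with hA
  set B := posExt w1.length s.length (M + 1) N b with hB
  have hAi : ∀ i : Fin N, A ((i:ℤ)+1) = ((a i : ℕ) : ℕ∞) := fun i =>
    posExt_pos w1.length s.length M N a i
  have hBi : ∀ i : Fin N, B ((i:ℤ)+1) = ((b i : ℕ) : ℕ∞) := fun i =>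
    posExt_pos w1.length s.length (M+1) N b i
  have hA2 : A (-2) = (w1.length : ℕ∞) := posExt_neg2 _ _ _ _ _
  have hB2 : B (-2) = (w1.length : ℕ∞) := posExt_neg2 _ _ _ _ _
  have hA1 : A (-1) = ((w1.length + M * s.length : ℕ) : ℕ∞) := posExt_neg1 _ _ _ _ _
  have hB1 : B (-1) = ((w1.length + (M+1) * s.length : ℕ) : ℕ∞) := posExt_neg1 _ _ _ _ _
  have hkey : ∀ i j : Fin N,
      (a i ≤ a j ↔ b i ≤ b j) ∧
      (((a i - a j) + (a j - a i) < 2*s.length ↔ (b i - b j) + (b j - b i) < 2*s.length)) ∧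
      ((a i - a j) + (a j - a i) < 2*s.length → a i + b j = b i + a j) := by
    intro i j
    have h := hinv ((i:ℤ)+1) ((j:ℤ)+1) (by omega) (by have := i.isLt; omega)
      (by omega) (by have := j.isLt; omega)
    rw [hAi i, hAi j, hBi i, hBi j, ndist_coe, ndist_coe] at h
    obtain ⟨h1, h2, h3, -⟩ := h
    refine ⟨by exact_mod_cast h1, by exact_mod_cast h2, fun hd => ?_⟩
    have := h3 (by exact_mod_cast hd)
    exact_mod_cast this
  intro i j
  refine ⟨?_, ?_, ?_, ?_⟩
  · constructor
    · intro h
      exact le_antisymm ((hkey i j).1.mp h.le) ((hkey j i).1.mp h.ge)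
    · intro h
      exact le_antisymm ((hkey i j).1.mpr h.le) ((hkey j i).1.mpr h.ge)
  · constructor
    · intro h
      have := (hkey i j).2.2 (by omega)
      omega
    · intro h
      have hd := (hkey i j).2.1.mpr (by omega)
      have := (hkey i j).2.2 hd
      omega
  · constructor
    · intro h
      by_contra hc
      exact absurd ((hkey j i).1.mpr (not_lt.mp hc)) (not_le.mpr h)
    · intro h
      by_contra hc
      exact absurd ((hkey j i).1.mp (not_lt.mp hc)) (not_le.mpr h)
  · have hcore := hinv ((i:ℤ)+1) ((i:ℤ)+1) (by omega) (by have := i.isLt; omega)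
      (by omega) (by have := i.isLt; omega)
    rw [hAi i, hBi i, hA2, hB2, hA1, hB1, ndist_coe] at hcore
    by_cases h1 : a i < w1.length
    · have hb : b i = a i := by
        have := hcore.2.2.2.1 (Or.inl (by exact_mod_cast h1.le))
        exact_mod_cast this
      rw [hb, wcat_pre _ _ _ _ h1, wcat_pre _ _ _ _ h1]
    · by_cases h2 : w1.length + M * s.length ≤ a i
      · have hb : b i = a i + s.length := by
          have := hcore.2.2.2.2.1 (Or.inl (by exact_mod_cast h2))
          exact_mod_cast this
        have hMs : (M+1) * s.length = M * s.length + s.length := by ring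
        rw [wcat_post w1 s M w2 _ h2, wcat_post w1 s (M+1) w2 _ (by omega)]
        congr 1
        omega
      · push_neg at h1 h2
        obtain ⟨hbl, hbu, hres⟩ : w1.length ≤ b i ∧ b i < w1.length + (M+1) * s.length ∧
            (a i - w1.length) % s.length = (b i - w1.length) % s.length := by
          have hpos : 0 < (M+1) * s.length := Nat.mul_pos (by omega) slpos
          by_cases he : a i = w1.length
          · have hb : b i = a i := by
              have := hcore.2.2.2.1 (Or.inl (by exact_mod_cast he.le))
              exact_mod_cast this
            exact ⟨by omega, by omega, by rw [hb]⟩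
          · have hgt : w1.length < a i := by omega
            have hlow := (hinv ((i:ℤ)+1) (-2) (by omega) (by have := i.isLt; omega)
              (by omega) (by omega)).1
            rw [hAi i, hBi i, hA2, hB2] at hlow
            have hbgt : w1.length < b i := by
              by_contra hc
              have : (b i : ℕ∞) ≤ (w1.length : ℕ∞) := by exact_mod_cast not_lt.mp hc
              have := hlow.mpr this
              have : a i ≤ w1.length := by exact_mod_cast this
              omega
            have hup := (hinv (-1) ((i:ℤ)+1) (by omega) (by omega)
              (by omega) (by have := i.isLt; omega)).1
            rw [hAi i, hBi i, hA1, hB1] at hup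
            have hblt : b i < w1.length + (M+1) * s.length := by
              by_contra hc
              have : ((w1.length + (M+1) * s.length : ℕ) : ℕ∞) ≤ (b i : ℕ∞) := by
                exact_mod_cast not_lt.mp hc
              have := hup.mpr this
              have : w1.length + M * s.length ≤ a i := by exact_mod_cast this
              omega
            obtain ⟨c, hc⟩ := hcore.2.2.2.2.2
              (Or.inl ⟨by exact_mod_cast hgt, by exact_mod_cast h2⟩)
            rw [ndist_coe] at hc
            have hc' : (a i - b i) + (b i - a i) = c * s.length := by exact_mod_cast hc
            refine ⟨by omega, hblt, ?_⟩
            rcases le_total (a i) (b i) with hab | hab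
            · have hb : b i - w1.length = (a i - w1.length) + c * s.length := by omega
              rw [hb, Nat.add_mul_mod_self_right]
            · have ha : a i - w1.length = (b i - w1.length) + c * s.length := by omega
              rw [ha, Nat.add_mul_mod_self_right]
        rw [wcat_mid w1 s hs M w2 _ h1 h2, wcat_mid w1 s hs (M+1) w2 _ hbl hbu]
        simp only [hres]

end Stmt3
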